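/- Under the truncated negative binomial model with binomial sampling at rate p, the conditional probability that a species has unsampled abundance k given sampled abundance l ≥ 1 is P(n^{1-p}=k | n^p=l) = [C(k+l,l)·p^l·(1-p)^k · C(k+l+r-1,k+l)·ξ^{k+l}·(1-ξ)^r] / [C(l+r-1,l)·ξ_p^l·(1-ξ_p)^r], and these probabilities sum to 1 over k ≥ 0. -/

import Mathlib

open MeasureTheory Real Set
open scoped ENNReal NNReal

/-- Generalized negative binomial coefficient C(n+r-1, n) = Γ(n+r)/(Γ(n+1)Γ(r)). -/
noncomputable def nbCoef (r : ℝ) (n : ℕ) : ℝ :=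
  Real.Gamma (n + r) / (Real.Gamma (n + 1) * Real.Gamma r)

lemma myIntegrableOn {a r : ℝ} (ha : 0 < a) (hr : 0 < r) :
    IntegrableOn (fun t : ℝ => t ^ (a - 1) * Real.exp (-(r * t))) (Ioi 0) := by
  rw [← Ioc_union_Ioi_eq_Ioi (zero_le_one (α := ℝ)), integrableOn_union]
  constructor
  · rw [← integrableOn_Icc_iff_integrableOn_Ioc]
    refine IntegrableOn.mul_continuousOn ?_ ?_ isCompact_Icc
    · refine (intervalIntegrable_iff_integrableOn_Icc_of_le zero_le_one).mp ?_
      exact intervalIntegral.intervalIntegrable_rpow' (by linarith)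
    · exact (Real.continuous_exp.comp (continuous_const.mul continuous_id).neg).continuousOn
  · have hcont : ContinuousOn (fun t : ℝ => t ^ (a - 1) * Real.exp (-(r * t))) (Ici 1) := by
      refine ContinuousOn.mul ?_ ?_
      · exact (continuousOn_id.rpow_const fun x hx =>
          Or.inl (by have : (1:ℝ) ≤ x := hx; positivity))
      · exact (Real.continuous_exp.comp (continuous_const.mul continuous_id).neg).continuousOn
    refine integrable_of_isBigO_exp_neg (b := r / 2) (by positivity) hcont ?_
    have htend := tendsto_rpow_mul_exp_neg_mul_atTop_nhds_zero (a - 1) (r / 2) (by positivity)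
    have h1 : (fun t : ℝ => t ^ (a - 1) * Real.exp (-(r / 2) * t)) =O[Filter.atTop]
        (fun _ : ℝ => (1 : ℝ)) := htend.isBigO_one ℝ
    have h2 := h1.mul (Asymptotics.isBigO_refl (fun t : ℝ => Real.exp (-(r / 2) * t)) Filter.atTop)
    refine (h2.congr ?_ ?_).trans (Asymptotics.isBigO_refl _ _)
    · intro t
      rw [mul_assoc, ← Real.exp_add]
      ring_nf
    · intro t; rw [one_mul]

lemma myLintegral {a r : ℝ} (ha : 0 < a) (hr : 0 < r) :
    ∫⁻ t in Ioi 0, ENNReal.ofReal (t ^ (a - 1) * Real.exp (-(r * t))) =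
      ENNReal.ofReal ((1 / r) ^ a * Real.Gamma a) := by
  rw [← Real.integral_rpow_mul_exp_neg_mul_Ioi ha hr,
    ← ofReal_integral_eq_lintegral_ofReal (myIntegrableOn ha hr)]
  filter_upwards [self_mem_ae_restrict (measurableSet_Ioi (a := (0:ℝ)))] with t ht
  have ht' : (0:ℝ) < t := ht
  positivity

lemma hasSum_gamma {s x : ℝ} (hs : 0 < s) (hx0 : 0 ≤ x) (hx1 : x < 1) :
    HasSum (fun k : ℕ => Real.Gamma (k + s) / (k.factorial : ℝ) * x ^ k)
      ((1 - x) ^ (-s) * Real.Gamma s) := by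
  have h1x : 0 < 1 - x := by linarith
  set g : ℕ → ℝ := fun k => Real.Gamma (k + s) / (k.factorial : ℝ) * x ^ k with hg
  have hgnn : ∀ k, 0 ≤ g k := by
    intro k
    have h1 : 0 < (k:ℝ) + s := by positivity
    have := Real.Gamma_pos_of_pos h1
    simp only [hg]
    positivity
  set C : ℝ := (1 / (1 - x)) ^ s * Real.Gamma s with hC
  have hCnn : 0 ≤ C := by
    have := Real.Gamma_pos_of_pos hs
    positivity
  -- key : ∑' k, ofReal (g k) = ofReal C
  have key : ∑' k : ℕ, ENNReal.ofReal (g k) = ENNReal.ofReal C := by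
    have hrow : ∀ k : ℕ, (∫⁻ t in Ioi 0, ENNReal.ofReal (x ^ k / (k.factorial : ℝ) *
          (t ^ ((k : ℝ) + s - 1) * Real.exp (-(1 * t))))) = ENNReal.ofReal (g k) := by
      intro k
      have hc : (0:ℝ) ≤ x ^ k / (k.factorial : ℝ) := by positivity
      simp_rw [ENNReal.ofReal_mul hc]
      rw [lintegral_const_mul' _ _ ENNReal.ofReal_ne_top,
        myLintegral (by positivity) one_pos, ← ENNReal.ofReal_mul hc]
      congr 1
      simp only [hg, one_div_one, Real.one_rpow, one_mul]
      ring
    calc ∑' k : ℕ, ENNReal.ofReal (g k)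
        = ∑' k : ℕ, ∫⁻ t in Ioi 0, ENNReal.ofReal (x ^ k / (k.factorial : ℝ) *
            (t ^ ((k : ℝ) + s - 1) * Real.exp (-(1 * t)))) := by
          exact (tsum_congr fun k => (hrow k).symm)
      _ = ∫⁻ t in Ioi 0, ∑' k : ℕ, ENNReal.ofReal (x ^ k / (k.factorial : ℝ) *
            (t ^ ((k : ℝ) + s - 1) * Real.exp (-(1 * t)))) := by
          rw [lintegral_tsum]
          intro k
          apply Measurable.aemeasurable
          fun_prop
      _ = ∫⁻ t in Ioi 0, ENNReal.ofReal (t ^ (s - 1) * Real.exp (-((1 - x) * t))) := by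
          refine setLIntegral_congr_fun measurableSet_Ioi (fun t ht => ?_)
          have ht' : (0:ℝ) < t := ht
          have hsum : HasSum (fun k : ℕ => x ^ k / (k.factorial : ℝ) *
              (t ^ ((k : ℝ) + s - 1) * Real.exp (-(1 * t))))
              (t ^ (s - 1) * Real.exp (-((1 - x) * t))) := by
            have base : HasSum (fun k : ℕ => (x * t) ^ k / (k.factorial : ℝ))
                (Real.exp (x * t)) := by
              rw [Real.exp_eq_exp_ℝ]
              exact NormedSpace.expSeries_div_hasSum_exp (x * t)
            have h0' : HasSum (fun k : ℕ => (x * t) ^ k / (k.factorial : ℝ) *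
                (t ^ (s - 1) * Real.exp (-t)))
                (Real.exp (x * t) * (t ^ (s - 1) * Real.exp (-t))) :=
              HasSum.mul_right _ base
            have heq : (fun k : ℕ => (x * t) ^ k / (k.factorial : ℝ) *
                (t ^ (s - 1) * Real.exp (-t))) =
                fun k : ℕ => x ^ k / (k.factorial : ℝ) *
                  (t ^ ((k : ℝ) + s - 1) * Real.exp (-(1 * t))) := by
              funext k
              have hts : t ^ ((k : ℝ) + s - 1) = t ^ (k : ℕ) * t ^ (s - 1) := by
                rw [← Real.rpow_natCast t k, ← Real.rpow_add ht']
                ring_nf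
              rw [hts, mul_pow]
              ring_nf
            rw [heq] at h0'
            have hval : Real.exp (x * t) * (t ^ (s - 1) * Real.exp (-t)) =
                t ^ (s - 1) * Real.exp (-((1 - x) * t)) := by
              have h3 : x * t + -t = -((1 - x) * t) := by ring
              rw [show Real.exp (x * t) * (t ^ (s - 1) * Real.exp (-t)) =
                t ^ (s - 1) * (Real.exp (x * t) * Real.exp (-t)) by ring,
                ← Real.exp_add, h3]
            rwa [hval] at h0'
          have hnn : ∀ k : ℕ, 0 ≤ x ^ k / (k.factorial : ℝ) *
              (t ^ ((k : ℝ) + s - 1) * Real.exp (-(1 * t))) := by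
            intro k; positivity
          rw [← ENNReal.ofReal_tsum_of_nonneg hnn hsum.summable, hsum.tsum_eq]
      _ = ENNReal.ofReal C := by
          rw [myLintegral hs h1x]
  -- now conclude real HasSum
  have hsumm : Summable g := by
    have hne : ∑' k : ℕ, ENNReal.ofReal (g k) ≠ ⊤ := by
      rw [key]; exact ENNReal.ofReal_ne_top
    have := ENNReal.summable_toReal hne
    refine this.congr fun k => ?_
    rw [ENNReal.toReal_ofReal (hgnn k)]
  have htsum : ∑' k, g k = C := by
    have h2 : ENNReal.ofReal (∑' k, g k) = ENNReal.ofReal C := by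
      rw [ENNReal.ofReal_tsum_of_nonneg hgnn hsumm, key]
    exact (ENNReal.ofReal_eq_ofReal_iff (tsum_nonneg hgnn) hCnn).mp h2
  have : (1 - x) ^ (-s) = (1 / (1 - x)) ^ s := by
    rw [Real.rpow_neg h1x.le, one_div, Real.inv_rpow h1x.le]
  rw [this]
  exact hsumm.hasSum_iff.mpr htsum

lemma hasSum_nbCoef {s x : ℝ} (hs : 0 < s) (hx0 : 0 ≤ x) (hx1 : x < 1) :
    HasSum (fun k : ℕ => nbCoef s k * x ^ k) ((1 - x) ^ (-s)) := by
  have hΓ : 0 < Real.Gamma s := Real.Gamma_pos_of_pos hs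
  have h := (hasSum_gamma hs hx0 hx1).div_const (Real.Gamma s)
  have heq : (fun k : ℕ => Real.Gamma (k + s) / (k.factorial : ℝ) * x ^ k / Real.Gamma s) =
      fun k : ℕ => nbCoef s k * x ^ k := by
    funext k
    rw [nbCoef, Real.Gamma_nat_eq_factorial k]
    ring
  rw [heq] at h
  rwa [mul_div_assoc, div_self hΓ.ne', mul_one] at h

lemma nbCoef_pos {r : ℝ} (hr : 0 < r) (n : ℕ) : 0 < nbCoef r n := by
  rw [nbCoef]
  have h1 : 0 < Real.Gamma ((n : ℝ) + r) := Real.Gamma_pos_of_pos (by positivity)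
  have h2 : 0 < Real.Gamma ((n : ℝ) + 1) := Real.Gamma_pos_of_pos (by positivity)
  have h3 : 0 < Real.Gamma r := Real.Gamma_pos_of_pos hr
  positivity

lemma nbCoef_zero {r : ℝ} (hr : 0 < r) : nbCoef r 0 = 1 := by
  have := Real.Gamma_pos_of_pos hr
  simp [nbCoef, Real.Gamma_one]
  exact this.ne'

lemma nbCoef_choose_mul {r : ℝ} (hr : 0 < r) (k l : ℕ) :
    ((k + l).choose l : ℝ) * nbCoef r (k + l) = nbCoef (r + l) k * nbCoef r l := by
  have hch : ((k + l).choose l : ℝ) =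
      ((k + l).factorial : ℝ) / ((l.factorial : ℝ) * (k.factorial : ℝ)) := by
    rw [Nat.cast_choose ℝ (Nat.le_add_left l k), Nat.add_sub_cancel]
  have e1 : Real.Gamma ((k + l : ℕ) + 1) = ((k + l).factorial : ℝ) :=
    Real.Gamma_nat_eq_factorial (k + l)
  have e2 : Real.Gamma ((k : ℝ) + 1) = (k.factorial : ℝ) := Real.Gamma_nat_eq_factorial k
  have e3 : Real.Gamma ((l : ℝ) + 1) = (l.factorial : ℝ) := Real.Gamma_nat_eq_factorial l
  have e4 : Real.Gamma ((k + l : ℕ) + r) = Real.Gamma ((k : ℝ) + (r + l)) := by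
    congr 1
    push_cast
    ring
  have e5 : Real.Gamma ((l : ℝ) + r) = Real.Gamma (r + (l : ℝ)) := by rw [add_comm]
  have hΓr : 0 < Real.Gamma r := Real.Gamma_pos_of_pos hr
  have hΓrl : 0 < Real.Gamma (r + (l : ℝ)) := Real.Gamma_pos_of_pos (by positivity)
  have hkf : (0:ℝ) < (k.factorial : ℝ) := by positivity
  have hlf : (0:ℝ) < (l.factorial : ℝ) := by positivity
  have hklf : (0:ℝ) < ((k + l).factorial : ℝ) := by positivity
  rw [nbCoef, nbCoef, nbCoef, hch, e1, e2, e3, e4, ← e5]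
  rw [e5]
  field_simp

/-- Conditional probability of unsampled abundance k given sampled abundance l ≥ 1,
under the truncated negative binomial model with binomial thinning at rate p:
P(n^{1-p}=k | n^p=l) = [C(k+l,l) p^l (1-p)^k C(k+l+r-1,k+l) ξ^{k+l} (1-ξ)^r] /
[C(l+r-1,l) ξ_p^l (1-ξ_p)^r], and these probabilities sum to 1 over k ≥ 0. -/
theorem stmt10 {Ω : Type*} [MeasurableSpace Ω] (μ : Measure Ω)
    [IsProbabilityMeasure μ] (r ξ p : ℝ) (hr : 0 < r)
    (hξ : ξ ∈ Set.Ioo (0:ℝ) 1) (hp : p ∈ Set.Ioo (0:ℝ) 1)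
    (N Np : Ω → ℕ) (hle : ∀ ω, Np ω ≤ N ω)
    (hjoint : ∀ n k : ℕ, k ≤ n →
      μ {ω | N ω = n ∧ Np ω = k} =
        ENNReal.ofReal ((n.choose k : ℝ) * p ^ k * (1 - p) ^ (n - k) *
          (if 1 ≤ n then (1 - (1 - ξ) ^ r)⁻¹ * nbCoef r n * ξ ^ n * (1 - ξ) ^ r
           else 0)))
    (l : ℕ) (hl : 1 ≤ l) :
    (∀ k : ℕ,
      (μ {ω | N ω - Np ω = k ∧ Np ω = l}).toReal / (μ {ω | Np ω = l}).toReal =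
        (((k + l).choose l : ℝ) * p ^ l * (1 - p) ^ k *
          nbCoef r (k + l) * ξ ^ (k + l) * (1 - ξ) ^ r) /
        (nbCoef r l * (p * ξ / (1 - ξ * (1 - p))) ^ l *
          (1 - p * ξ / (1 - ξ * (1 - p))) ^ r)) ∧
    ∑' k : ℕ,
      (((k + l).choose l : ℝ) * p ^ l * (1 - p) ^ k *
        nbCoef r (k + l) * ξ ^ (k + l) * (1 - ξ) ^ r) /
      (nbCoef r l * (p * ξ / (1 - ξ * (1 - p))) ^ l *
        (1 - p * ξ / (1 - ξ * (1 - p))) ^ r) = 1 := by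
  classical
  obtain ⟨hξ0, hξ1⟩ := hξ
  obtain ⟨hp0, hp1⟩ := hp
  have h1ξ : 0 < 1 - ξ := by linarith
  have h1p : 0 < 1 - p := by linarith
  have hq : 0 < 1 - ξ * (1 - p) := by nlinarith
  have hc0 : 0 < 1 - (1 - ξ) ^ r := by
    have := Real.rpow_lt_one h1ξ.le (by linarith) hr
    linarith
  set c : ℝ := (1 - (1 - ξ) ^ r)⁻¹ with hc
  have hcpos : 0 < c := by positivity
  set f : ℕ → ℝ := fun k => ((k + l).choose l : ℝ) * p ^ l * (1 - p) ^ k *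
    nbCoef r (k + l) * ξ ^ (k + l) * (1 - ξ) ^ r with hf
  set D : ℝ := nbCoef r l * (p * ξ / (1 - ξ * (1 - p))) ^ l *
    (1 - p * ξ / (1 - ξ * (1 - p))) ^ r with hD
  have hfnn : ∀ k, 0 ≤ f k := by
    intro k
    have := nbCoef_pos hr (k + l)
    simp only [hf]
    positivity
  have hξp1 : 0 < 1 - p * ξ / (1 - ξ * (1 - p)) := by
    rw [sub_pos, div_lt_one hq]
    nlinarith
  have hDpos : 0 < D := by
    have h1 := nbCoef_pos hr l
    have h2 : 0 < p * ξ / (1 - ξ * (1 - p)) := by positivity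
    have h3 : 0 < (1 - p * ξ / (1 - ξ * (1 - p))) ^ r := Real.rpow_pos_of_pos hξp1 r
    simp only [hD]
    positivity
  -- HasSum f D
  have hfD : HasSum f D := by
    have hy0 : (0:ℝ) ≤ (1 - p) * ξ := by positivity
    have hy1 : (1 - p) * ξ < 1 := by nlinarith
    have hb := (hasSum_nbCoef (s := r + (l:ℝ)) (x := (1 - p) * ξ)
      (by positivity) hy0 hy1).mul_left (nbCoef r l * (p ^ l * ξ ^ l * (1 - ξ) ^ r))
    have hfun : (fun k : ℕ => nbCoef r l * (p ^ l * ξ ^ l * (1 - ξ) ^ r) *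
        (nbCoef (r + (l:ℝ)) k * ((1 - p) * ξ) ^ k)) = f := by
      funext k
      have hid := nbCoef_choose_mul hr k l
      simp only [hf]
      have : (((k + l).choose l : ℝ)) * p ^ l * (1 - p) ^ k *
          nbCoef r (k + l) * ξ ^ (k + l) * (1 - ξ) ^ r =
          (((k + l).choose l : ℝ) * nbCoef r (k + l)) *
            (p ^ l * (1 - p) ^ k * ξ ^ (k + l) * (1 - ξ) ^ r) := by ring
      rw [this, hid, pow_add, mul_pow]
      push_cast
      ring
    rw [hfun] at hb
    have hval : nbCoef r l * (p ^ l * ξ ^ l * (1 - ξ) ^ r) *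
        (1 - (1 - p) * ξ) ^ (-(r + (l:ℝ))) = D := by
      have hqeq : 1 - (1 - p) * ξ = 1 - ξ * (1 - p) := by ring
      have hrw : (1 - (1 - p) * ξ) ^ (-(r + (l:ℝ))) =
          ((1 - ξ * (1 - p)) ^ r)⁻¹ * ((1 - ξ * (1 - p)) ^ (l:ℕ))⁻¹ := by
        rw [hqeq, Real.rpow_neg hq.le, Real.rpow_add hq, Real.rpow_natCast, mul_inv]
      rw [hrw, hD]
      have e1 : 1 - p * ξ / (1 - ξ * (1 - p)) = (1 - ξ) / (1 - ξ * (1 - p)) := by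
        field_simp
        ring
      rw [e1, Real.div_rpow h1ξ.le hq.le, div_pow, mul_pow]
      field_simp
    rwa [hval] at hb
  -- HasSum w 1
  set w : ℕ → ℝ := fun n => if 1 ≤ n then c * nbCoef r n * ξ ^ n * (1 - ξ) ^ r else 0
    with hw
  have hwnn : ∀ n, 0 ≤ w n := by
    intro n
    simp only [hw]
    split
    · have := nbCoef_pos hr n
      positivity
    · exact le_refl 0
  have hwsum : HasSum w 1 := by
    have hbase := (hasSum_nbCoef hr hξ0.le hξ1).mul_left (c * (1 - ξ) ^ r)
    have hsingle : HasSum (fun n : ℕ => if n = 0 then c * (1 - ξ) ^ r else 0)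
        (c * (1 - ξ) ^ r) := hasSum_ite_eq 0 _
    have hd := hbase.sub hsingle
    have hfun : (fun n : ℕ => c * (1 - ξ) ^ r * (nbCoef r n * ξ ^ n) -
        (if n = 0 then c * (1 - ξ) ^ r else 0)) = w := by
      funext n
      simp only [hw]
      cases n with
      | zero => simp [nbCoef_zero hr]
      | succ m => simp; ring
    have hval : c * (1 - ξ) ^ r * (1 - ξ) ^ (-r) - c * (1 - ξ) ^ r = 1 := by
      have hrpow : (1 - ξ) ^ r * (1 - ξ) ^ (-r) = 1 := by
        rw [← Real.rpow_add h1ξ]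
        simp
      calc c * (1 - ξ) ^ r * (1 - ξ) ^ (-r) - c * (1 - ξ) ^ r
          = c * ((1 - ξ) ^ r * (1 - ξ) ^ (-r)) - c * (1 - ξ) ^ r := by ring
        _ = c * (1 - (1 - ξ) ^ r) := by rw [hrpow]; ring
        _ = 1 := inv_mul_cancel₀ hc0.ne'
    rw [hfun] at hd
    rwa [hval] at hd
  -- measure bookkeeping
  set S : ℕ → ℕ → ℝ≥0∞ := fun n k => μ {ω | N ω = n ∧ Np ω = k} with hS
  have hS0 : ∀ n k, n < k → S n k = 0 := by
    intro n k h
    have hempty : {ω | N ω = n ∧ Np ω = k} = (∅ : Set Ω) := by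
      ext ω
      simp only [mem_setOf_eq, mem_empty_iff_false, iff_false, not_and]
      intro h1 h2
      have := hle ω
      omega
    simp only [hS, hempty, measure_empty]
  have hSval : ∀ n k, k ≤ n → S n k = ENNReal.ofReal ((n.choose k : ℝ) * p ^ k *
      (1 - p) ^ (n - k) * w n) := by
    intro n k hkn
    simp only [hS, hw]
    exact hjoint n k hkn
  have hrow : ∀ n, ∑' k, S n k = ENNReal.ofReal (w n) := by
    intro n
    rw [tsum_eq_sum (s := Finset.range (n + 1))
      (fun k hk => hS0 n k (by simp only [Finset.mem_range] at hk; omega))]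
    have hterm : ∀ k ∈ Finset.range (n + 1), S n k =
        ENNReal.ofReal ((n.choose k : ℝ) * p ^ k * (1 - p) ^ (n - k) * w n) := by
      intro k hk
      exact hSval n k (by simp only [Finset.mem_range] at hk; omega)
    rw [Finset.sum_congr rfl hterm, ← ENNReal.ofReal_sum_of_nonneg]
    · congr 1
      rw [← Finset.sum_mul]
      have hb : ∑ k ∈ Finset.range (n + 1), (n.choose k : ℝ) * p ^ k * (1 - p) ^ (n - k)
          = 1 := by
        have h2 := add_pow p (1 - p) n
        have h3 : p + (1 - p) = 1 := by ring
        rw [h3, one_pow] at h2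
        have h4 : ∑ k ∈ Finset.range (n + 1), (n.choose k : ℝ) * p ^ k * (1 - p) ^ (n - k)
            = ∑ k ∈ Finset.range (n + 1), p ^ k * (1 - p) ^ (n - k) * (n.choose k : ℝ) :=
          Finset.sum_congr rfl fun k _ => by ring
        rw [h4, ← h2]
      rw [hb, one_mul]
    · intro k _
      have := hwnn n
      positivity
  have htot : ∑' nk : ℕ × ℕ, S nk.1 nk.2 = 1 := by
    rw [ENNReal.tsum_prod']
    calc ∑' n, ∑' k, S n k = ∑' n, ENNReal.ofReal (w n) := tsum_congr hrow
      _ = ENNReal.ofReal (∑' n, w n) := (ENNReal.ofReal_tsum_of_nonneg hwnn hwsum.summable).symm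
      _ = 1 := by rw [hwsum.tsum_eq, ENNReal.ofReal_one]
  have hcfnn : ∀ k, 0 ≤ c * f k := fun k => mul_nonneg hcpos.le (hfnn k)
  have hnumval : ∀ k, S (k + l) l = ENNReal.ofReal (c * f k) := by
    intro k
    rw [hSval (k + l) l (Nat.le_add_left l k)]
    congr 1
    simp only [hw, hf]
    rw [if_pos (by omega), Nat.add_sub_cancel]
    ring
  have hcol : ∑' n, S n l = ENNReal.ofReal (c * D) := by
    have hshift : ∑' k, S (k + l) l = ∑' n, S n l := by
      have hinj : Function.Injective (fun k : ℕ => k + l) := add_left_injective l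
      have hsupp : Function.support (fun n => S n l) ⊆ Set.range (fun k : ℕ => k + l) := by
        intro n hn
        have hln : ¬ n < l := fun h => hn (hS0 n l h)
        exact ⟨n - l, by show n - l + l = n; omega⟩
      exact hinj.tsum_eq hsupp
    rw [← hshift]
    calc ∑' k, S (k + l) l = ∑' k, ENNReal.ofReal (c * f k) := tsum_congr hnumval
      _ = ENNReal.ofReal (∑' k, c * f k) :=
        (ENNReal.ofReal_tsum_of_nonneg hcfnn (hfD.mul_left c).summable).symm
      _ = ENNReal.ofReal (c * D) := by rw [(hfD.mul_left c).tsum_eq]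
  have hNpl : μ {ω | Np ω = l} = ENNReal.ofReal (c * D) := by
    set T : Set (ℕ × ℕ) := {q | q.2 = l} with hT
    have ht : ∑' q : T, S q.1.1 q.1.2 = ∑' n, S n l := by
      let e : ℕ ≃ T :=
        { toFun := fun n => ⟨(n, l), rfl⟩
          invFun := fun q => q.1.1
          left_inv := fun n => rfl
          right_inv := fun q => by
            rcases q with ⟨⟨a, b⟩, hb⟩
            have : b = l := hb
            subst this
            rfl }
      exact (e.tsum_eq (fun q : T => S q.1.1 q.1.2)).symm
    have hsplit : ∑' q : T, S q.1.1 q.1.2 + ∑' q : ↑Tᶜ, S q.1.1 q.1.2 =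
        ∑' nk : ℕ × ℕ, S nk.1 nk.2 :=
      Summable.tsum_add_tsum_compl (s := T) (f := fun nk : ℕ × ℕ => S nk.1 nk.2)
        ENNReal.summable ENNReal.summable
    rw [ht, htot] at hsplit
    have hA : μ {ω | Np ω = l} ≤ ∑' n, S n l := by
      have hsub : {ω | Np ω = l} ⊆ ⋃ n, {ω | N ω = n ∧ Np ω = l} := by
        intro ω hω
        exact mem_iUnion.mpr ⟨N ω, rfl, hω⟩
      exact (measure_mono hsub).trans (measure_iUnion_le _)
    have hB : μ {ω | Np ω ≠ l} ≤ ∑' q : ↑Tᶜ, S q.1.1 q.1.2 := by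
      have hsub : {ω | Np ω ≠ l} ⊆ ⋃ q : ↑Tᶜ, {ω | N ω = q.1.1 ∧ Np ω = q.1.2} := by
        intro ω hω
        exact mem_iUnion.mpr ⟨⟨(N ω, Np ω), hω⟩, rfl, rfl⟩
      exact (measure_mono hsub).trans (measure_iUnion_le _)
    have hcover : (1:ℝ≥0∞) ≤ μ {ω | Np ω = l} + μ {ω | Np ω ≠ l} := by
      have hu : (univ : Set Ω) ⊆ {ω | Np ω = l} ∪ {ω | Np ω ≠ l} := by
        intro ω _
        by_cases h : Np ω = l
        · exact Or.inl h
        · exact Or.inr h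
      calc (1:ℝ≥0∞) = μ univ := measure_univ.symm
        _ ≤ μ ({ω | Np ω = l} ∪ {ω | Np ω ≠ l}) := measure_mono hu
        _ ≤ μ {ω | Np ω = l} + μ {ω | Np ω ≠ l} := measure_union_le _ _
    have hune : ∑' q : ↑Tᶜ, S q.1.1 q.1.2 ≠ ⊤ := by
      have hle1 : ∑' q : ↑Tᶜ, S q.1.1 q.1.2 ≤ 1 := by
        rw [← hsplit]
        exact le_add_self
      exact (hle1.trans_lt ENNReal.one_lt_top).ne
    have h1 : ∑' n, S n l + ∑' q : ↑Tᶜ, S q.1.1 q.1.2 ≤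
        μ {ω | Np ω = l} + ∑' q : ↑Tᶜ, S q.1.1 q.1.2 := by
      rw [hsplit]
      exact hcover.trans (add_le_add le_rfl hB)
    have hBle : ∑' n, S n l ≤ μ {ω | Np ω = l} :=
      (ENNReal.add_le_add_iff_right hune).mp h1
    rw [← hcol]
    exact le_antisymm hA hBle
  constructor
  · intro k
    have hset : {ω | N ω - Np ω = k ∧ Np ω = l} = {ω | N ω = k + l ∧ Np ω = l} := by
      ext ω
      simp only [mem_setOf_eq]
      constructor
      · rintro ⟨h1, h2⟩
        have := hle ω
        omega
      · rintro ⟨h1, h2⟩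
        have := hle ω
        omega
    have hnum : μ {ω | N ω - Np ω = k ∧ Np ω = l} = ENNReal.ofReal (c * f k) := by
      rw [hset]
      exact hnumval k
    rw [hnum, hNpl, ENNReal.toReal_ofReal (hcfnn k),
      ENNReal.toReal_ofReal (mul_nonneg hcpos.le hDpos.le)]
    exact mul_div_mul_left (f k) D hcpos.ne'
  · have := (hfD.div_const D).tsum_eq
    rw [div_self hDpos.ne'] at this
    exact this
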